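/- Let π : 𝓛_{r,2} → gl(V) be a faithful representation of type (a,p,b) of the free 2-step nilpotent Lie algebra of rank r. Then r ≤ p·min(a,b) + 1. -/

import Mathlib

/-- The free 2-step nilpotent Lie algebra of rank `r`: `𝕂^r ⊕ Λ²𝕂^r`, where
`Λ²𝕂^r` is modeled by coordinates indexed by pairs `i < j`. -/
abbrev FreeNilp2 (K : Type) [Field K] (r : ℕ) : Type :=
  (Fin r → K) × ({p : Fin r × Fin r // p.1 < p.2} → K)

/-- The wedge `x ∧ y` in coordinates. -/
def wedge {K : Type} [Field K] {r : ℕ} (x y : Fin r → K) :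
    {p : Fin r × Fin r // p.1 < p.2} → K :=
  fun p => x p.1.1 * y p.1.2 - x p.1.2 * y p.1.1

noncomputable instance (K : Type) [Field K] (r : ℕ) : LieRing (FreeNilp2 K r) where
  bracket a b := (0, wedge a.1 b.1)
  add_lie a b c := by
    refine Prod.ext (by simp) (funext fun p => ?_)
    show wedge (a.1 + b.1) c.1 p = wedge a.1 c.1 p + wedge b.1 c.1 p
    simp [wedge]; ring
  lie_add a b c := by
    refine Prod.ext (by simp) (funext fun p => ?_)
    show wedge a.1 (b.1 + c.1) p = wedge a.1 b.1 p + wedge a.1 c.1 p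
    simp [wedge]; ring
  lie_self a := by
    refine Prod.ext (by simp) (funext fun p => ?_)
    show wedge a.1 a.1 p = 0
    simp [wedge]; ring
  leibniz_lie a b c := by
    refine Prod.ext (by simp) (funext fun p => ?_)
    show wedge a.1 (0 : Fin r → K) p =
      wedge (0 : Fin r → K) c.1 p + wedge b.1 (0 : Fin r → K) p
    simp [wedge]

noncomputable instance (K : Type) [Field K] (r : ℕ) : LieAlgebra K (FreeNilp2 K r) where
  lie_smul t a b := by
    refine Prod.ext (by show (0 : Fin r → K) = t • (0 : Fin r → K); simp) (funext fun p => ?_)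
    show wedge a.1 (t • b.1) p = t * wedge a.1 b.1 p
    simp [wedge]; ring

/-- The block index of a basis vector, for block sizes `a, p, b`. -/
def blk {a p b : ℕ} : Fin a ⊕ Fin p ⊕ Fin b → Fin 3
  | Sum.inl _ => 0
  | Sum.inr (Sum.inl _) => 1
  | Sum.inr (Sum.inr _) => 2

/-- A matrix is strictly block upper triangular (blocks of sizes `a, p, b`) if
its only nonzero entries lie in the blocks `(1,2)`, `(1,3)` and `(2,3)`. -/
def StrictBlockUpper {K : Type} [Field K] {a p b : ℕ}
    (M : Matrix (Fin a ⊕ Fin p ⊕ Fin b) (Fin a ⊕ Fin p ⊕ Fin b) K) : Prop :=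
  ∀ i j, ¬ blk i < blk j → M i j = 0

attribute [local instance 100] LieRing.ofAssociativeRing

section Aux

variable {K : Type} [Field K] {r a p b : ℕ}

lemma blk_lt_cases (i j : Fin a ⊕ Fin p ⊕ Fin b) : True := trivial

lemma mul_zero_of_left12
    {M N : Matrix (Fin a ⊕ Fin p ⊕ Fin b) (Fin a ⊕ Fin p ⊕ Fin b) K}
    (hM : StrictBlockUpper M) (hN : StrictBlockUpper N)
    (h12 : ∀ i k, M (Sum.inl i) (Sum.inr (Sum.inl k)) = 0) :
    M * N = 0 := by
  ext i j
  rw [Matrix.mul_apply, Matrix.zero_apply]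
  refine Finset.sum_eq_zero fun k _ => ?_
  rcases k with k | k | k
  · rw [hM i (Sum.inl k) (by rcases i with i|i|i <;> simp only [blk] <;> decide), zero_mul]
  · rcases i with i | i | i
    · rw [h12, zero_mul]
    · rw [hM _ _ (by simp only [blk]; decide), zero_mul]
    · rw [hM _ _ (by simp only [blk]; decide), zero_mul]
  · rw [hN (Sum.inr (Sum.inr k)) j (by rcases j with j|j|j <;> simp only [blk] <;> decide), mul_zero]

lemma mul_zero_of_right23
    {M N : Matrix (Fin a ⊕ Fin p ⊕ Fin b) (Fin a ⊕ Fin p ⊕ Fin b) K}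
    (hM : StrictBlockUpper M) (hN : StrictBlockUpper N)
    (h23 : ∀ k j, N (Sum.inr (Sum.inl k)) (Sum.inr (Sum.inr j)) = 0) :
    M * N = 0 := by
  ext i j
  rw [Matrix.mul_apply, Matrix.zero_apply]
  refine Finset.sum_eq_zero fun k _ => ?_
  rcases k with k | k | k
  · rw [hM i (Sum.inl k) (by rcases i with i|i|i <;> simp only [blk] <;> decide), zero_mul]
  · rcases j with j | j | j
    · rw [hN _ _ (by simp only [blk]; decide), mul_zero]
    · rw [hN _ _ (by simp only [blk]; decide), mul_zero]
    · rw [h23, mul_zero]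
  · rw [hN (Sum.inr (Sum.inr k)) j (by rcases j with j|j|j <;> simp only [blk] <;> decide), mul_zero]

end Aux

section Aux2

variable {K : Type} [Field K] {r : ℕ}

lemma finrank_le_one_of_minors (W : Submodule K (Fin r → K))
    (h : ∀ x ∈ W, ∀ y ∈ W, ∀ i j : Fin r, x i * y j = x j * y i) :
    Module.finrank K ↥W ≤ 1 := by
  rcases eq_or_ne W ⊥ with hW | hW
  · rw [hW, finrank_bot]
    exact zero_le_one
  · obtain ⟨x, hxW, hx⟩ := (Submodule.ne_bot_iff W).mp hW
    obtain ⟨i, hi⟩ : ∃ i, x i ≠ 0 := by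
      by_contra hc; push_neg at hc; exact hx (funext hc)
    have hle : W ≤ Submodule.span K {x} := by
      intro y hy
      rw [Submodule.mem_span_singleton]
      refine ⟨y i / x i, funext fun j => ?_⟩
      have hxy := h x hxW y hy j i
      show (y i / x i) * x j = y j
      rw [div_mul_eq_mul_div, div_eq_iff hi]
      linear_combination hxy
    calc Module.finrank K ↥W ≤ Module.finrank K ↥(Submodule.span K ({x} : Set (Fin r → K))) :=
          Submodule.finrank_mono hle
      _ = 1 := finrank_span_singleton hx

lemma rank_bound_aux {m n : ℕ} (f : (Fin r → K) →ₗ[K] Matrix (Fin m) (Fin n) K)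
    (h : ∀ x y, f x = 0 → f y = 0 → wedge x y = 0) : r ≤ m * n + 1 := by
  have h1 : Module.finrank K ↥(LinearMap.ker f) ≤ 1 := by
    apply finrank_le_one_of_minors
    intro x hx y hy i j
    have hw := h x y (LinearMap.mem_ker.mp hx) (LinearMap.mem_ker.mp hy)
    rcases lt_trichotomy i j with hlt | heq | hgt
    · have hthis : x i * y j - x j * y i = 0 := congrFun hw ⟨(i, j), hlt⟩
      linear_combination hthis
    · rw [heq]
    · have hthis : x j * y i - x i * y j = 0 := congrFun hw ⟨(j, i), hgt⟩
      linear_combination -hthis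
  have h2 := LinearMap.finrank_range_add_finrank_ker f
  have h3 : Module.finrank K ↥(LinearMap.range f) ≤ m * n := by
    have := Submodule.finrank_le (LinearMap.range f)
    rwa [Module.finrank_matrix, Module.finrank_self, mul_one, Fintype.card_fin,
      Fintype.card_fin] at this
  have h4 : Module.finrank K (Fin r → K) = r := Module.finrank_fin_fun K
  omega

end Aux2

/-- If the free 2-step nilpotent Lie algebra of rank `r` has a faithful
representation of type `(a, p, b)` (with the central elements supported in the
block `(1,3)`), then `r ≤ p·min(a,b) + 1`. -/
theorem type_apb_r_bound (K : Type) [Field K] [CharZero K] (r a p b : ℕ)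
    (π : FreeNilp2 K r →ₗ⁅K⁆ Matrix (Fin a ⊕ Fin p ⊕ Fin b) (Fin a ⊕ Fin p ⊕ Fin b) K)
    (hinj : Function.Injective π)
    (hblock : ∀ X : FreeNilp2 K r, StrictBlockUpper (π X))
    (hcentral : ∀ z : FreeNilp2 K r, z.1 = 0 →
      ∀ i j, ¬ (blk i = 0 ∧ blk j = 2) → π z i j = 0) :
    r ≤ p * min a b + 1 := by

  classical
  have hbr : ∀ x y : Fin r → K,
      π (((0 : Fin r → K), wedge x y) : FreeNilp2 K r) =
        π ((x, 0) : FreeNilp2 K r) * π ((y, 0) : FreeNilp2 K r) -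
          π ((y, 0) : FreeNilp2 K r) * π ((x, 0) : FreeNilp2 K r) := by
    intro x y
    have h0 : (((0 : Fin r → K), wedge x y) : FreeNilp2 K r) =
        ⁅((x, 0) : FreeNilp2 K r), ((y, 0) : FreeNilp2 K r)⁆ := rfl
    rw [h0, LieHom.map_lie, Ring.lie_def]
  have hzero : ∀ x y : Fin r → K,
      π ((x, 0) : FreeNilp2 K r) * π ((y, 0) : FreeNilp2 K r) -
        π ((y, 0) : FreeNilp2 K r) * π ((x, 0) : FreeNilp2 K r) = 0 →
      wedge x y = 0 := by
    intro x y hxy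
    have h0 : π (((0 : Fin r → K), wedge x y) : FreeNilp2 K r) = π 0 := by
      rw [hbr, hxy, map_zero]
    exact congrArg Prod.snd (hinj h0)
  -- bound from the (2,3) blocks
  have hCb : r ≤ p * b + 1 := by
    refine rank_bound_aux
      (f := { toFun := fun x => Matrix.of fun k j =>
                π ((x, 0) : FreeNilp2 K r) (Sum.inr (Sum.inl k)) (Sum.inr (Sum.inr j))
              map_add' := ?_, map_smul' := ?_ }) ?_
    · intro x y
      have h0 : ((x + y, 0) : FreeNilp2 K r) = ((x, 0) : FreeNilp2 K r) + ((y, 0) : FreeNilp2 K r) := by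
        simp [Prod.ext_iff]
      funext k j
      show π _ _ _ = _
      rw [h0, map_add]
      rfl
    · intro t x
      have h0 : ((t • x, 0) : FreeNilp2 K r) = t • ((x, 0) : FreeNilp2 K r) := by
        simp [Prod.ext_iff]
      funext k j
      show π _ _ _ = _
      rw [h0, map_smul]
      rfl
    · intro x y hx hy
      have hx' : ∀ k j, π ((x, 0) : FreeNilp2 K r) (Sum.inr (Sum.inl k)) (Sum.inr (Sum.inr j)) = 0 :=
        fun k j => congrFun (congrFun hx k) j
      have hy' : ∀ k j, π ((y, 0) : FreeNilp2 K r) (Sum.inr (Sum.inl k)) (Sum.inr (Sum.inr j)) = 0 :=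
        fun k j => congrFun (congrFun hy k) j
      refine hzero x y ?_
      rw [mul_zero_of_right23 (hblock _) (hblock _) hy',
        mul_zero_of_right23 (hblock _) (hblock _) hx', sub_zero]
  -- bound from the (1,2) blocks
  have hAb : r ≤ a * p + 1 := by
    refine rank_bound_aux
      (f := { toFun := fun x => Matrix.of fun i k =>
                π ((x, 0) : FreeNilp2 K r) (Sum.inl i) (Sum.inr (Sum.inl k))
              map_add' := ?_, map_smul' := ?_ }) ?_
    · intro x y
      have h0 : ((x + y, 0) : FreeNilp2 K r) = ((x, 0) : FreeNilp2 K r) + ((y, 0) : FreeNilp2 K r) := by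
        simp [Prod.ext_iff]
      funext i k
      show π _ _ _ = _
      rw [h0, map_add]
      rfl
    · intro t x
      have h0 : ((t • x, 0) : FreeNilp2 K r) = t • ((x, 0) : FreeNilp2 K r) := by
        simp [Prod.ext_iff]
      funext i k
      show π _ _ _ = _
      rw [h0, map_smul]
      rfl
    · intro x y hx hy
      have hx' : ∀ i k, π ((x, 0) : FreeNilp2 K r) (Sum.inl i) (Sum.inr (Sum.inl k)) = 0 :=
        fun i k => congrFun (congrFun hx i) k
      have hy' : ∀ i k, π ((y, 0) : FreeNilp2 K r) (Sum.inl i) (Sum.inr (Sum.inl k)) = 0 :=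
        fun i k => congrFun (congrFun hy i) k
      refine hzero x y ?_
      rw [mul_zero_of_left12 (hblock _) (hblock _) hx',
        mul_zero_of_left12 (hblock _) (hblock _) hy', sub_zero]
  rcases le_total a b with hab | hab
  · rw [min_eq_left hab, mul_comm]; exact hAb
  · rw [min_eq_right hab]; exact hCb
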